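/- Let m ≥ 2 and let k = (k_0, k_1, ...) be positive integers with m coprime to (k_0-1)! and to k_j! for every j ≥ 1. Let n ≥ 0 have base-m representation n = d_0 + d_1 m + ... + d_t m^t with 0 ≤ d_j ≤ m-1. Then the number b_m^k(n) of k-coloured m-ary partitions of n satisfies b_m^k(n) ≡ C(k_0-1+d_0, k_0-1) · ∏_{j=1}^{t} C(k_j+d_j, k_j) (mod m). -/

import Mathlib

open Finset

/-- A `k`-coloured `m`-ary partition of `n`: a finitely supported function
`c : ℕ × ℕ →₀ ℕ`, where `c (j, i)` is the multiplicity of the part `m^j` in colour `i`,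
with `c (j, i) = 0` whenever `i ≥ k j`, and total sum `∑ c (j, i) · m^j = n`. -/
def IsColouredMaryPartition (m : ℕ) (k : ℕ → ℕ) (n : ℕ) (c : ℕ × ℕ →₀ ℕ) : Prop :=
  (∀ j i, k j ≤ i → c (j, i) = 0) ∧ c.sum (fun p v => v * m ^ p.1) = n

namespace CMPaux

/-- shifted colour sequence -/
def shiftk (k : ℕ → ℕ) : ℕ → ℕ := fun j => k (j + 1)

noncomputable def B (m : ℕ) (k : ℕ → ℕ) (n : ℕ) : ℕ :=
  Nat.card {c : ℕ × ℕ →₀ ℕ // IsColouredMaryPartition m k n c}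

noncomputable def S (m : ℕ) (k : ℕ → ℕ) (n : ℕ) : ℕ := ∑ u ∈ range (n + 1), B m k u

lemma inj0 : Function.Injective (fun i : ℕ => ((0 : ℕ), i)) := by
  intro a b h; simpa using h

lemma injS : Function.Injective (fun p : ℕ × ℕ => (p.1 + 1, p.2)) := by
  intro a b h
  simp only [Prod.mk.injEq] at h
  exact Prod.ext (by omega) h.2

noncomputable def row0 (c : ℕ × ℕ →₀ ℕ) : ℕ →₀ ℕ :=
  Finsupp.comapDomain (fun i : ℕ => ((0 : ℕ), i)) c inj0.injOn

noncomputable def shiftc (c : ℕ × ℕ →₀ ℕ) : ℕ × ℕ →₀ ℕ :=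
  Finsupp.comapDomain (fun p : ℕ × ℕ => (p.1 + 1, p.2)) c injS.injOn

@[simp] lemma row0_apply (c : ℕ × ℕ →₀ ℕ) (i : ℕ) : row0 c i = c (0, i) := rfl

@[simp] lemma shiftc_apply (c : ℕ × ℕ →₀ ℕ) (p : ℕ × ℕ) : shiftc c p = c (p.1 + 1, p.2) := rfl

lemma modEq_sum {α : Type*} {m : ℕ} (s : Finset α) (f g : α → ℕ)
    (h : ∀ a ∈ s, f a ≡ g a [MOD m]) : ∑ a ∈ s, f a ≡ ∑ a ∈ s, g a [MOD m] := by
  classical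
  induction s using Finset.induction_on with
  | empty => rfl
  | insert _ _ hx ih =>
    rw [Finset.sum_insert hx, Finset.sum_insert hx]
    exact (h _ (Finset.mem_insert_self _ _)).add
      (ih fun a ha => h a (Finset.mem_insert_of_mem ha))

section Finiteness

variable {m : ℕ} {k : ℕ → ℕ} {n : ℕ}

lemma part_le {c : ℕ × ℕ →₀ ℕ} (hm : 0 < m) (h : IsColouredMaryPartition m k n c)
    (p : ℕ × ℕ) : c p ≤ n := by
  by_cases hc : c p = 0
  · omega
  · have hp : p ∈ c.support := Finsupp.mem_support_iff.2 hc
    have h1 : c p * m ^ p.1 ≤ ∑ q ∈ c.support, c q * m ^ q.1 :=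
      Finset.single_le_sum (f := fun q => c q * m ^ q.1) (fun q _ => Nat.zero_le _) hp
    have h2 : (∑ q ∈ c.support, c q * m ^ q.1) = n := h.2
    have h3 : c p ≤ c p * m ^ p.1 :=
      Nat.le_mul_of_pos_right _ (Nat.pow_pos hm)
    omega

lemma part_high {c : ℕ × ℕ →₀ ℕ} (hm : 2 ≤ m) (h : IsColouredMaryPartition m k n c)
    {p : ℕ × ℕ} (hp : n < p.1) : c p = 0 := by
  by_contra hc
  have hp' : p ∈ c.support := Finsupp.mem_support_iff.2 hc
  have h1 : c p * m ^ p.1 ≤ ∑ q ∈ c.support, c q * m ^ q.1 :=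
    Finset.single_le_sum (f := fun q => c q * m ^ q.1) (fun q _ => Nat.zero_le _) hp'
  have h2 : (∑ q ∈ c.support, c q * m ^ q.1) = n := h.2
  have h3 : m ^ p.1 ≤ c p * m ^ p.1 :=
    Nat.le_mul_of_pos_left _ (Nat.pos_of_ne_zero hc)
  have h4 : p.1 < m ^ p.1 := Nat.lt_pow_self (by omega)
  omega

lemma finiteCMP (hm : 2 ≤ m) (k : ℕ → ℕ) (n : ℕ) :
    Finite {c : ℕ × ℕ →₀ ℕ // IsColouredMaryPartition m k n c} := by
  classical
  set Kb := (range (n + 1)).sup k with hKb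
  apply Finite.of_injective
    (f := fun c : {c : ℕ × ℕ →₀ ℕ // IsColouredMaryPartition m k n c} =>
      fun p : (range (n + 1) ×ˢ range Kb : Finset (ℕ × ℕ)) =>
        (⟨c.1 p.1, Nat.lt_succ_of_le (part_le (by omega) c.2 p.1)⟩ : Fin (n + 1)))
  intro c₁ c₂ hcc
  apply Subtype.ext
  ext p
  obtain ⟨j, i⟩ := p
  rcases le_or_gt (k j) i with hki | hki
  · rw [c₁.2.1 j i hki, c₂.2.1 j i hki]
  · rcases le_or_gt j n with hj | hj
    · have hmem : ((j, i) : ℕ × ℕ) ∈ (range (n + 1) ×ˢ range Kb : Finset (ℕ × ℕ)) := by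
        refine Finset.mem_product.2 ⟨Finset.mem_range.2 (by omega), Finset.mem_range.2 ?_⟩
        exact lt_of_lt_of_le hki (Finset.le_sup (Finset.mem_range.2 (by omega)))
      have := congrFun hcc ⟨(j, i), hmem⟩
      simpa using this
    · rw [part_high hm c₁.2 (by simpa using hj), part_high hm c₂.2 (by simpa using hj)]

lemma B_zero (hm : 2 ≤ m) (k : ℕ → ℕ) : B m k 0 = 1 := by
  rw [B, Nat.card_eq_one_iff_unique]
  constructor
  · constructor
    intro ⟨c₁, h₁⟩ ⟨c₂, h₂⟩
    have key : ∀ c : ℕ × ℕ →₀ ℕ, IsColouredMaryPartition m k 0 c → c = 0 := by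
      intro c hc
      ext p
      by_contra hp
      have hp' : p ∈ c.support := Finsupp.mem_support_iff.2 hp
      have h1 : c p * m ^ p.1 ≤ ∑ q ∈ c.support, c q * m ^ q.1 :=
        Finset.single_le_sum (f := fun q => c q * m ^ q.1) (fun q _ => Nat.zero_le _) hp'
      have h2 : (∑ q ∈ c.support, c q * m ^ q.1) = 0 := hc.2
      have h3 : 0 < m ^ p.1 := Nat.pow_pos (by omega)
      have : c p = 0 := by nlinarith
      exact hp this
    exact Subtype.ext ((key c₁ h₁).trans (key c₂ h₂).symm)
  · exact ⟨⟨0, fun j i _ => rfl, by simp⟩⟩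

end Finiteness

lemma row0_add (c d : ℕ × ℕ →₀ ℕ) : row0 (c + d) = row0 c + row0 d := by
  ext i; simp

lemma shiftc_add (c d : ℕ × ℕ →₀ ℕ) : shiftc (c + d) = shiftc c + shiftc d := by
  ext p; simp

lemma row0_zero : row0 0 = 0 := by ext i; simp
lemma shiftc_zero : shiftc 0 = 0 := by ext p; simp

lemma row0_single_zero (i b : ℕ) : row0 (Finsupp.single ((0 : ℕ), i) b) = Finsupp.single i b := by
  ext a; simp [Finsupp.single_apply, Prod.ext_iff]

lemma row0_single_succ (j i b : ℕ) : row0 (Finsupp.single ((j + 1 : ℕ), i) b) = 0 := by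
  ext a; simp [Finsupp.single_apply]

lemma shiftc_single_zero (i b : ℕ) : shiftc (Finsupp.single ((0 : ℕ), i) b) = 0 := by
  ext p; simp [Finsupp.single_apply, Prod.ext_iff]

lemma shiftc_single_succ (j i b : ℕ) :
    shiftc (Finsupp.single ((j + 1 : ℕ), i) b) = Finsupp.single ((j : ℕ), i) b := by
  ext p; simp [Finsupp.single_apply, Prod.ext_iff]

lemma key_split (m : ℕ) (c : ℕ × ℕ →₀ ℕ) :
    c.sum (fun p v => v * m ^ p.1)
      = (row0 c).sum (fun _ v => v) + m * (shiftc c).sum (fun p v => v * m ^ p.1) := by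
  induction c using Finsupp.induction with
  | zero => simp [row0_zero, shiftc_zero]
  | single_add p b f hpf hb ih =>
    have hz : ∀ q : ℕ × ℕ, (fun (p : ℕ × ℕ) (v : ℕ) => v * m ^ p.1) q 0 = 0 := by simp
    have hadd : ∀ (q : ℕ × ℕ) (v w : ℕ),
        (fun (p : ℕ × ℕ) (v : ℕ) => v * m ^ p.1) q (v + w)
          = (fun (p : ℕ × ℕ) (v : ℕ) => v * m ^ p.1) q v
            + (fun (p : ℕ × ℕ) (v : ℕ) => v * m ^ p.1) q w := by
      intro q v w; simp [add_mul]
    rw [Finsupp.sum_add_index' hz hadd, row0_add, shiftc_add,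
      Finsupp.sum_add_index' (fun _ => rfl) (fun _ v w => rfl),
      Finsupp.sum_add_index' hz hadd, Finsupp.sum_single_index (hz p)]
    obtain ⟨j, i⟩ := p
    cases j with
    | zero =>
      rw [row0_single_zero, shiftc_single_zero, Finsupp.sum_single_index rfl]
      simp only [Finsupp.sum_zero_index]
      rw [ih]; ring
    | succ j =>
      rw [row0_single_succ, shiftc_single_succ, Finsupp.sum_single_index (hz (j, i))]
      simp only [Finsupp.sum_zero_index]
      rw [ih]; ring

-- stars and bars
noncomputable def msEquiv (K : ℕ) : Multiset (Fin K) ≃ (Fin K → ℕ) :=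
  Multiset.toFinsupp.toEquiv.trans Finsupp.equivFunOnFinite

lemma msEquiv_card (K : ℕ) (μ : Multiset (Fin K)) :
    ∑ i, msEquiv K μ i = Multiset.card μ := by
  have h : ∀ i, msEquiv K μ i = μ.count i := fun i => rfl
  simp only [h]
  exact Multiset.sum_count_eq_card (fun a _ => Finset.mem_univ a)

noncomputable def sbEquiv (K s : ℕ) :
    {f : Fin K → ℕ // ∑ i, f i = s} ≃ Sym (Fin K) s :=
  Equiv.subtypeEquiv (msEquiv K).symm (fun f => by
    rw [show Multiset.card ((msEquiv K).symm f) = ∑ i, f i from by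
      conv_rhs => rw [← (msEquiv K).apply_symm_apply f]
      rw [msEquiv_card]])

lemma card_sb (K s : ℕ) :
    Nat.card {f : Fin K → ℕ // ∑ i, f i = s} = (K + s - 1).choose s := by
  rw [Nat.card_congr (sbEquiv K s), Nat.card_eq_fintype_card,
    Sym.card_sym_eq_choose, Fintype.card_fin]

lemma finite_sb (K s : ℕ) : Finite {f : Fin K → ℕ // ∑ i, f i = s} :=
  Finite.of_equiv _ (sbEquiv K s).symm

@[simp] lemma shiftk_apply (k : ℕ → ℕ) (j : ℕ) : shiftk k j = k (j + 1) := rfl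

-- embeddings
def emb0 (K : ℕ) : Fin K ↪ ℕ × ℕ :=
  ⟨fun i => ((0 : ℕ), (i : ℕ)), by intro a b h; simp only [Prod.mk.injEq] at h; exact Fin.ext h.2⟩
def embS : ℕ × ℕ ↪ ℕ × ℕ :=
  ⟨fun p => (p.1 + 1, p.2), by
    intro a b h; simp only [Prod.mk.injEq] at h; exact Prod.ext (by omega) h.2⟩

noncomputable def recomp (K : ℕ) (f : Fin K → ℕ) (c' : ℕ × ℕ →₀ ℕ) : ℕ × ℕ →₀ ℕ :=
  Finsupp.embDomain (emb0 K) (Finsupp.equivFunOnFinite.symm f) + Finsupp.embDomain embS c'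

lemma recomp_apply0 (K : ℕ) (f : Fin K → ℕ) (c' : ℕ × ℕ →₀ ℕ) (i : ℕ) :
    recomp K f c' (0, i) = if h : i < K then f ⟨i, h⟩ else 0 := by
  rw [recomp, Finsupp.add_apply]
  have h2 : Finsupp.embDomain embS c' (0, i) = 0 := by
    apply Finsupp.embDomain_notin_range
    rintro ⟨⟨j, l⟩, h⟩
    change ((j + 1, l) : ℕ × ℕ) = (0, i) at h; simp at h
  rw [h2, add_zero]
  split_ifs with h
  · have : ((0 : ℕ), i) = emb0 K ⟨i, h⟩ := rfl
    rw [this, Finsupp.embDomain_apply_self]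
    rfl
  · apply Finsupp.embDomain_notin_range
    rintro ⟨a, ha⟩
    change ((0 : ℕ), (a : ℕ)) = (0, i) at ha; simp only [Prod.mk.injEq] at ha
    exact h (ha.2 ▸ a.isLt)

lemma recomp_applyS (K : ℕ) (f : Fin K → ℕ) (c' : ℕ × ℕ →₀ ℕ) (j i : ℕ) :
    recomp K f c' (j + 1, i) = c' (j, i) := by
  rw [recomp, Finsupp.add_apply]
  have h1 : Finsupp.embDomain (emb0 K) (Finsupp.equivFunOnFinite.symm f) (j + 1, i) = 0 := by
    apply Finsupp.embDomain_notin_range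
    rintro ⟨a, ha⟩
    change ((0 : ℕ), (a : ℕ)) = (j + 1, i) at ha; simp at ha
  have h2 : ((j + 1 : ℕ), i) = embS (j, i) := rfl
  rw [h1, h2, Finsupp.embDomain_apply_self, zero_add]

lemma recomp_sum (m K : ℕ) (f : Fin K → ℕ) (c' : ℕ × ℕ →₀ ℕ) :
    (recomp K f c').sum (fun p v => v * m ^ p.1)
      = (∑ i, f i) + (c'.sum (fun p v => v * m ^ p.1)) * m := by
  have hz : ∀ q : ℕ × ℕ, (fun (p : ℕ × ℕ) (v : ℕ) => v * m ^ p.1) q 0 = 0 := by simp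
  have hadd : ∀ (q : ℕ × ℕ) (v w : ℕ), (v + w) * m ^ q.1 = v * m ^ q.1 + w * m ^ q.1 := by
    intro q v w; ring
  rw [recomp, Finsupp.sum_add_index' hz hadd, Finsupp.sum_embDomain, Finsupp.sum_embDomain]
  congr 1
  · rw [Finsupp.sum_fintype]
    · apply Finset.sum_congr rfl
      intro i _
      show _ * m ^ (0 : ℕ) = _; simp
    · intro i; simp [emb0]
  · rw [show (c'.sum fun a b => b * m ^ (embS a).1)
        = c'.sum fun p v => (v * m ^ p.1) * m from
      Finsupp.sum_congr (fun p _ => by show _ * m ^ (p.1 + 1) = _; ring)]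
    exact (Finsupp.sum_mul _ _).symm

/-- The decomposition equivalence. -/
noncomputable def decompEquiv (m : ℕ) (hm : 2 ≤ m) (k : ℕ → ℕ) (n : ℕ) :
    {c : ℕ × ℕ →₀ ℕ // IsColouredMaryPartition m k n c} ≃
      Σ a : Fin (n / m + 1), {y : (Fin (k 0) → ℕ) × (ℕ × ℕ →₀ ℕ) //
        (∑ i, y.1 i = n - m * (a : ℕ)) ∧ IsColouredMaryPartition m (shiftk k) (a : ℕ) y.2} where
  toFun c := by
    refine ⟨⟨(shiftc c.1).sum (fun p v => v * m ^ p.1), ?_⟩,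
      ⟨(fun i => c.1 (0, (i : ℕ)), shiftc c.1), ?_, ?_, rfl⟩⟩
    · -- a < n/m + 1
      have key := key_split m c.1
      rw [c.2.2] at key
      have hma : m * (shiftc c.1).sum (fun p v => v * m ^ p.1) ≤ n := by omega
      have := (Nat.le_div_iff_mul_le (by omega : 0 < m)).2
        (show ((shiftc c.1).sum fun p v => v * m ^ p.1) * m ≤ n by rw [mul_comm]; exact hma)
      omega
    · -- row sum
      show ∑ i : Fin (k 0), c.1 (0, (i : ℕ))
        = n - m * ((shiftc c.1).sum fun p v => v * m ^ p.1)
      have key := key_split m c.1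
      rw [c.2.2] at key
      have hrow : (row0 c.1).sum (fun _ v => v) = ∑ i : Fin (k 0), c.1 (0, (i : ℕ)) := by
        rw [Finsupp.sum_of_support_subset _ (s := range (k 0)) ?_ _ (fun _ _ => rfl)]
        · simp only [row0_apply]
          rw [← Fin.sum_univ_eq_sum_range (fun i => c.1 (0, i)) (k 0)]
        · intro i hi
          rw [Finsupp.mem_support_iff, row0_apply] at hi
          rw [Finset.mem_range]
          by_contra hik
          exact hi (c.2.1 0 i (by omega))
      rw [hrow] at key
      omega
    · -- colour condition on shiftc
      intro j i hki
      rw [shiftc_apply]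
      exact c.2.1 (j + 1) i hki
  invFun x := by
    obtain ⟨a, ⟨⟨f, c'⟩, hf, hc'⟩⟩ := x
    refine ⟨recomp (k 0) f c', ?_, ?_⟩
    · intro j i hki
      cases j with
      | zero =>
        rw [recomp_apply0]
        rw [dif_neg (by omega)]
      | succ j =>
        rw [recomp_applyS]
        exact hc'.1 j i hki
    · rw [recomp_sum, hf, hc'.2]
      have h1 : (a : ℕ) ≤ n / m := by omega
      have h2 : m * (a : ℕ) ≤ n :=
        le_trans (Nat.mul_le_mul_left m h1) (by rw [mul_comm]; exact Nat.div_mul_le_self n m)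
      have h3 : (a : ℕ) * m = m * (a : ℕ) := mul_comm _ _
      omega
  left_inv c := by
    apply Subtype.ext
    ext p
    obtain ⟨j, i⟩ := p
    cases j with
    | zero =>
      rw [recomp_apply0]
      split_ifs with h
      · rfl
      · exact (c.2.1 0 i (by omega)).symm
    | succ j =>
      rw [recomp_applyS, shiftc_apply]
  right_inv x := by
    obtain ⟨a, ⟨⟨f, c'⟩, hf, hc'⟩⟩ := x
    have h1 : shiftc (recomp (k 0) f c') = c' := by
      ext p
      rw [shiftc_apply, recomp_applyS]
    apply Sigma.subtype_ext
    · apply Fin.ext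
      show (shiftc (recomp (k 0) f c')).sum (fun p v => v * m ^ p.1) = (a : ℕ)
      rw [h1, hc'.2]
    · show ((fun i : Fin (k 0) => recomp (k 0) f c' (0, (i : ℕ))), shiftc (recomp (k 0) f c'))
        = (f, c')
      refine Prod.ext ?_ h1
      funext i
      show recomp (k 0) f c' (0, (i : ℕ)) = f i
      rw [recomp_apply0, dif_pos i.isLt]

lemma B_rec (m : ℕ) (hm : 2 ≤ m) (k : ℕ → ℕ) (hk0 : 0 < k 0) (n : ℕ) :
    B m k n = ∑ a ∈ range (n / m + 1),
      ((n - m * a) + (k 0 - 1)).choose (k 0 - 1) * B m (shiftk k) a := by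
  classical
  haveI : ∀ a : ℕ, Finite {c' : ℕ × ℕ →₀ ℕ // IsColouredMaryPartition m (shiftk k) a c'} :=
    fun a => finiteCMP hm (shiftk k) a
  haveI : ∀ s : ℕ, Finite {f : Fin (k 0) → ℕ // ∑ i, f i = s} := fun s => finite_sb _ _
  haveI hGfin : ∀ a : Fin (n / m + 1), Finite {y : (Fin (k 0) → ℕ) × (ℕ × ℕ →₀ ℕ) //
      (∑ i, y.1 i = n - m * (a : ℕ)) ∧ IsColouredMaryPartition m (shiftk k) (a : ℕ) y.2} :=
    fun a => Finite.of_equiv _ (Equiv.subtypeProdEquivProd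
      (p := fun f : Fin (k 0) → ℕ => ∑ i, f i = n - m * (a : ℕ))
      (q := fun c' : ℕ × ℕ →₀ ℕ => IsColouredMaryPartition m (shiftk k) (a : ℕ) c')).symm
  letI : ∀ a : Fin (n / m + 1), Fintype {y : (Fin (k 0) → ℕ) × (ℕ × ℕ →₀ ℕ) //
      (∑ i, y.1 i = n - m * (a : ℕ)) ∧ IsColouredMaryPartition m (shiftk k) (a : ℕ) y.2} :=
    fun a => Fintype.ofFinite _
  rw [B, Nat.card_congr (decompEquiv m hm k n), Nat.card_eq_fintype_card, Fintype.card_sigma,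
    ← Fin.sum_univ_eq_sum_range
      (fun a => ((n - m * a) + (k 0 - 1)).choose (k 0 - 1) * B m (shiftk k) a) (n / m + 1)]
  apply Finset.sum_congr rfl
  intro a _
  rw [← Nat.card_eq_fintype_card, Nat.card_congr (Equiv.subtypeProdEquivProd
      (p := fun f : Fin (k 0) → ℕ => ∑ i, f i = n - m * (a : ℕ))
      (q := fun c' : ℕ × ℕ →₀ ℕ => IsColouredMaryPartition m (shiftk k) (a : ℕ) c')),
    Nat.card_prod, card_sb]
  congr 1
  have h1 : k 0 + (n - m * (a : ℕ)) - 1 = (n - m * (a : ℕ)) + (k 0 - 1) := by omega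
  rw [h1]
  set s := n - m * (a : ℕ)
  rw [← Nat.choose_symm (Nat.le_add_right s (k 0 - 1)), Nat.add_sub_cancel_left]

lemma asc_mod (m J x b : ℕ) :
    (x + m * b + 1).ascFactorial J ≡ (x + 1).ascFactorial J [MOD m] := by
  induction J with
  | zero => rfl
  | succ J ih =>
    rw [Nat.ascFactorial_succ, Nat.ascFactorial_succ]
    have h1 : x + m * b + 1 + J ≡ x + 1 + J [MOD m] := by
      calc x + m * b + 1 + J = (x + 1 + J) + m * b := by ring
        _ ≡ (x + 1 + J) + 0 [MOD m] :=
            Nat.ModEq.add_left _ (Nat.modEq_zero_iff_dvd.2 ⟨b, rfl⟩)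
        _ = x + 1 + J := by ring
    exact h1.mul ih

lemma choose_shift_mod {m J : ℕ} (hc : Nat.Coprime m (Nat.factorial J)) (d b : ℕ) :
    (d + m * b + J).choose J ≡ (d + J).choose J [MOD m] := by
  have h3 := asc_mod m J d b
  rw [Nat.ascFactorial_eq_factorial_mul_choose, Nat.ascFactorial_eq_factorial_mul_choose] at h3
  exact Nat.ModEq.cancel_left_of_coprime hc h3

lemma hockey (J e : ℕ) :
    ∑ s ∈ range (e + 1), (s + J).choose J = (e + (J + 1)).choose (J + 1) := by
  have h := Nat.sum_Icc_choose (J + e) J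
  have h2 : ∑ s ∈ range (e + 1), (s + J).choose J = ∑ i ∈ Icc J (J + e), i.choose J := by
    refine Finset.sum_nbij' (i := fun s => s + J) (j := fun i => i - J) ?_ ?_ ?_ ?_ ?_
    · intro s hs; rw [Finset.mem_range] at hs; rw [Finset.mem_Icc]; omega
    · intro i hi; rw [Finset.mem_Icc] at hi; rw [Finset.mem_range]; omega
    · intro s _; omega
    · intro i hi; rw [Finset.mem_Icc] at hi; omega
    · intro s _; rfl
  rw [h2, h]
  congr 1
  omega

lemma sub_digit {m n a : ℕ} (hm : 0 < m) (ha : a ≤ n / m) :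
    n - m * a = n % m + m * (n / m - a) := by
  have h1 : m * (n / m - a) + m * a = m * (n / m) := by
    rw [← Nat.mul_add, Nat.sub_add_cancel ha]
  have h2 : m * (n / m) + n % m = n := Nat.div_add_mod n m
  have h3 : m * a ≤ m * (n / m) := Nat.mul_le_mul_left m ha
  omega

lemma S_rec (m : ℕ) (hm : 2 ≤ m) (k : ℕ → ℕ) (hk0 : 0 < k 0)
    (hc : Nat.Coprime m (Nat.factorial (k 0))) (n : ℕ) :
    S m k n ≡ (n % m + k 0).choose (k 0) * S m (shiftk k) (n / m) [MOD m] := by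
  have hm0 : 0 < m := by omega
  set J := k 0 - 1 with hJ
  have hJ1 : J + 1 = k 0 := by omega
  have step12 : ∑ u ∈ range (n + 1), ∑ a ∈ range (u / m + 1),
        ((u - m * a) + J).choose J * B m (shiftk k) a
      = ∑ a ∈ range (n / m + 1), ∑ s ∈ range (n - m * a + 1),
        ((s + J).choose J * B m (shiftk k) a) := by
    rw [Finset.sum_sigma', Finset.sum_sigma']
    refine Finset.sum_nbij' (i := fun p => ⟨p.2, p.1 - m * p.2⟩)
      (j := fun p => ⟨m * p.1 + p.2, p.1⟩) ?_ ?_ ?_ ?_ ?_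
    · rintro ⟨u, a⟩ hp
      rw [Finset.mem_sigma] at hp
      dsimp only at hp ⊢
      rw [Finset.mem_range, Finset.mem_range] at hp
      have h1 : a ≤ u / m := by omega
      have h2 : a * m ≤ u := (Nat.le_div_iff_mul_le hm0).1 h1
      rw [Finset.mem_sigma]
      dsimp only
      rw [Finset.mem_range, Finset.mem_range]
      constructor
      · have h3 : a * m ≤ n := by omega
        have := (Nat.le_div_iff_mul_le hm0).2 h3
        omega
      · have : m * a = a * m := mul_comm _ _
        omega
    · rintro ⟨a, s⟩ hp
      rw [Finset.mem_sigma] at hp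
      dsimp only at hp ⊢
      rw [Finset.mem_range, Finset.mem_range] at hp
      have h1 : a ≤ n / m := by omega
      have h2 : a * m ≤ n := (Nat.le_div_iff_mul_le hm0).1 h1
      rw [Finset.mem_sigma]
      dsimp only
      rw [Finset.mem_range, Finset.mem_range]
      constructor
      · have : m * a = a * m := mul_comm _ _
        omega
      · have h3 : a * m ≤ m * a + s := by rw [mul_comm]; omega
        have := (Nat.le_div_iff_mul_le hm0).2 h3
        omega
    · rintro ⟨u, a⟩ hp
      rw [Finset.mem_sigma] at hp
      dsimp only at hp ⊢
      rw [Finset.mem_range, Finset.mem_range] at hp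
      have h1 : a ≤ u / m := by omega
      have h2 : a * m ≤ u := (Nat.le_div_iff_mul_le hm0).1 h1
      have h3 : m * a + (u - m * a) = u := by
        have : m * a = a * m := mul_comm _ _
        omega
      rw [h3]
    · rintro ⟨a, s⟩ _
      dsimp only
      have h3 : m * a + s - m * a = s := by omega
      rw [h3]
    · rintro ⟨u, a⟩ _
      rfl
  have hS : S m k n = ∑ a ∈ range (n / m + 1),
      ((n - m * a) + (J + 1)).choose (J + 1) * B m (shiftk k) a := by
    have e1 : S m k n = ∑ u ∈ range (n + 1), ∑ a ∈ range (u / m + 1),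
        ((u - m * a) + J).choose J * B m (shiftk k) a :=
      Finset.sum_congr rfl fun u _ => B_rec m hm k hk0 u
    rw [e1, step12]
    refine Finset.sum_congr rfl fun a _ => ?_
    rw [← Finset.sum_mul, hockey]
  rw [hS, hJ1]
  refine (modEq_sum _ _ (fun a => (n % m + k 0).choose (k 0) * B m (shiftk k) a) ?_).trans ?_
  · intro a ha
    rw [Finset.mem_range] at ha
    have hd2 := sub_digit hm0 (show a ≤ n / m by omega)
    rw [hd2]
    exact (choose_shift_mod hc (n % m) (n / m - a)).mul_right _
  · rw [← Finset.mul_sum]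
    rfl

lemma S_main (m : ℕ) (hm : 2 ≤ m) : ∀ (t : ℕ) (k d : ℕ → ℕ), (∀ j, 0 < k j) →
    (∀ j, j < t → Nat.Coprime m (Nat.factorial (k j))) → (∀ j, j < t → d j ≤ m - 1) →
    S m k (∑ j ∈ range t, d j * m ^ j) ≡ ∏ j ∈ range t, (d j + k j).choose (k j) [MOD m] := by
  intro t
  induction t with
  | zero =>
    intro k d _ _ _
    simp only [Finset.range_zero, Finset.sum_empty, Finset.prod_empty]
    rw [show S m k 0 = 1 from by rw [S]; simp [B_zero hm]]
  | succ t ih =>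
    intro k d hk hc hd
    set n' := ∑ j ∈ range t, d (j + 1) * m ^ j with hn'
    have hd0 : d 0 < m := by have := hd 0 (by omega); omega
    have hnn : (∑ j ∈ range (t + 1), d j * m ^ j) = d 0 + m * n' := by
      rw [Finset.sum_range_succ']
      have h2 : ∑ j ∈ range t, d (j + 1) * m ^ (j + 1) = m * n' := by
        rw [hn', Finset.mul_sum]
        exact Finset.sum_congr rfl fun j _ => by ring
      rw [h2]
      simp [pow_zero]
      omega
    rw [hnn]
    have hmod : (d 0 + m * n') % m = d 0 := by
      rw [Nat.add_mul_mod_self_left, Nat.mod_eq_of_lt hd0]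
    have hdiv : (d 0 + m * n') / m = n' := by
      rw [Nat.add_mul_div_left _ _ (by omega : 0 < m), Nat.div_eq_of_lt hd0, zero_add]
    have h1 := S_rec m hm k (hk 0) (hc 0 (by omega)) (d 0 + m * n')
    rw [hmod, hdiv] at h1
    have h2 := ih (shiftk k) (fun j => d (j + 1)) (fun j => hk (j + 1))
      (fun j hj => hc (j + 1) (by omega)) (fun j hj => hd (j + 1) (by omega))
    simp only [shiftk_apply] at h2
    refine h1.trans ?_
    rw [Finset.prod_range_succ']
    calc (d 0 + k 0).choose (k 0) * S m (shiftk k) n'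
        ≡ (d 0 + k 0).choose (k 0) * ∏ j ∈ range t, (d (j + 1) + k (j + 1)).choose (k (j + 1))
          [MOD m] := Nat.ModEq.mul_left _ h2
      _ = (∏ j ∈ range t, (d (j + 1) + k (j + 1)).choose (k (j + 1)))
          * (d 0 + k 0).choose (k 0) := mul_comm _ _

theorem final (m : ℕ) (hm : 2 ≤ m) (k : ℕ → ℕ) (hk : ∀ j, 0 < k j)
    (h0 : Nat.Coprime m (Nat.factorial (k 0 - 1)))
    (hj : ∀ j, 1 ≤ j → Nat.Coprime m (Nat.factorial (k j)))
    (n t : ℕ) (d : ℕ → ℕ) (hd : ∀ j, j ≤ t → d j ≤ m - 1)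
    (hn : n = ∑ j ∈ range (t + 1), d j * m ^ j) :
    B m k n ≡ (k 0 - 1 + d 0).choose (k 0 - 1)
      * ∏ j ∈ Icc 1 t, (k j + d j).choose (k j) [MOD m] := by
  have hm0 : 0 < m := by omega
  set n' := ∑ j ∈ range t, d (j + 1) * m ^ j with hn'
  have hd0 : d 0 < m := by have := hd 0 (by omega); omega
  have hnn : n = d 0 + m * n' := by
    rw [hn, Finset.sum_range_succ']
    have h2 : ∑ j ∈ range t, d (j + 1) * m ^ (j + 1) = m * n' := by
      rw [hn', Finset.mul_sum]
      exact Finset.sum_congr rfl fun j _ => by ring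
    rw [h2]
    simp [pow_zero]
    omega
  have hmod : n % m = d 0 := by
    rw [hnn, Nat.add_mul_mod_self_left, Nat.mod_eq_of_lt hd0]
  have hdiv : n / m = n' := by
    rw [hnn, Nat.add_mul_div_left _ _ hm0, Nat.div_eq_of_lt hd0, zero_add]
  have hB : B m k n ≡ (d 0 + (k 0 - 1)).choose (k 0 - 1) * S m (shiftk k) n' [MOD m] := by
    rw [B_rec m hm k (hk 0) n]
    refine (modEq_sum _ _
      (fun a => (d 0 + (k 0 - 1)).choose (k 0 - 1) * B m (shiftk k) a) ?_).trans ?_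
    · intro a ha
      rw [Finset.mem_range] at ha
      have hd2 := sub_digit hm0 (show a ≤ n / m by omega)
      rw [hd2, hmod]
      exact (choose_shift_mod h0 (d 0) (n / m - a)).mul_right _
    · rw [← Finset.mul_sum, hdiv]
      rfl
  have hS := S_main m hm t (shiftk k) (fun j => d (j + 1)) (fun j => hk (j + 1))
    (fun j hjt => hj (j + 1) (by omega)) (fun j hjt => hd (j + 1) (by omega))
  simp only [shiftk_apply] at hS
  refine hB.trans ?_
  refine (Nat.ModEq.mul_left ((d 0 + (k 0 - 1)).choose (k 0 - 1)) hS).trans ?_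
  have hprod : ∏ j ∈ Icc 1 t, (k j + d j).choose (k j)
      = ∏ j ∈ range t, (d (j + 1) + k (j + 1)).choose (k (j + 1)) := by
    rw [← Finset.Ico_add_one_right_eq_Icc, Finset.prod_Ico_eq_prod_range]
    exact Finset.prod_congr rfl fun j _ => by rw [add_comm 1 j, add_comm (k (j + 1)) (d (j + 1))]
  rw [hprod, add_comm (k 0 - 1) (d 0)]

end CMPaux

/-- **Corollary 3 of the paper.**  Let `m ≥ 2` and `k₀, k₁, …` be positive
integers with `m` coprime to `(k₀-1)!` and to `k_j!` for `j ≥ 1`.  If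
`n = d₀ + d₁ m + ⋯ + d_t m^t` with `0 ≤ d_j ≤ m-1` is the base-`m` representation of `n`,
then `b_m^k(n) ≡ C(k₀-1+d₀, k₀-1) · ∏_{j=1}^{t} C(k_j+d_j, k_j) (mod m)`. -/
theorem coloured_mary_count_mod (m : ℕ) (hm : 2 ≤ m) (k : ℕ → ℕ) (hk : ∀ j, 0 < k j)
    (h0 : Nat.Coprime m (Nat.factorial (k 0 - 1)))
    (hj : ∀ j, 1 ≤ j → Nat.Coprime m (Nat.factorial (k j)))
    (n t : ℕ) (d : ℕ → ℕ) (hd : ∀ j, j ≤ t → d j ≤ m - 1)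
    (hn : n = ∑ j ∈ range (t + 1), d j * m ^ j) :
    Nat.card {c : ℕ × ℕ →₀ ℕ // IsColouredMaryPartition m k n c}
      ≡ (k 0 - 1 + d 0).choose (k 0 - 1) * ∏ j ∈ Icc 1 t, (k j + d j).choose (k j) [MOD m] := by
  exact CMPaux.final m hm k hk h0 hj n t d hd hn
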